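/- arXiv:2210.14560 — 8 statements merged into one kernel-verified Lean document; each statement's English description precedes it below -/
import Mathlib

section
/- Let 0 < γ < 1, ηβ > 0, and let A, B be the two roots of γx² − (1+ηβ)(1+γ)x + (1+ηβ) = 0 with A > B. Define U = (A−1)/(A−B), V = (1−B)/(A−B), and a_t = (δ/β)(U·A^t + V·B^t) for t = 0, 1, 2, … (with δ > 0, β > 0). Then for all t ≥ 1: (1+ηβ)·a_{t−1} + ηβγ·Σ_{i=0}^{t−1} a_i = γ·a_t. -/
/-- With `A > B` the roots of `γx² − (1+ηβ)(1+γ)x + (1+ηβ) = 0`,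
`U = (A−1)/(A−B)`, `V = (1−B)/(A−B)`, and `a t = (δ/β)(U·Aᵗ + V·Bᵗ)`,
for all `t ≥ 1`: `(1+ηβ)·a(t−1) + ηβγ·∑_{i=0}^{t−1} a i = γ·a t`. -/
theorem stmt_2 (γ η β δ : ℝ) (hγ0 : 0 < γ) (hγ1 : γ < 1) (hη : 0 < η) (hβ : 0 < β)
    (hδ : 0 < δ) (A B : ℝ)
    (hArt : γ * A ^ 2 - (1 + η * β) * (1 + γ) * A + (1 + η * β) = 0)
    (hBrt : γ * B ^ 2 - (1 + η * β) * (1 + γ) * B + (1 + η * β) = 0)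
    (hAB : A > B)
    (U V : ℝ) (hU : U = (A - 1) / (A - B)) (hV : V = (1 - B) / (A - B))
    (a : ℕ → ℝ) (ha : ∀ t, a t = (δ / β) * (U * A ^ t + V * B ^ t)) :
    ∀ t : ℕ, 1 ≤ t →
      (1 + η * β) * a (t - 1) + η * β * γ * (∑ i ∈ Finset.range t, a i) = γ * a t := by
  have hABne : A - B ≠ 0 := sub_ne_zero.2 (ne_of_gt hAB)
  have hβne : β ≠ 0 := ne_of_gt hβ
  -- Vieta: sum of roots
  have hsum : γ * (A + B) = (1 + η * β) * (1 + γ) := by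
    have h : γ * (A + B) * (A - B) = (1 + η * β) * (1 + γ) * (A - B) := by
      linear_combination hArt - hBrt
    exact mul_right_cancel₀ hABne h
  have ha0 : a 0 = δ / β := by
    rw [ha, hU, hV]
    field_simp
    ring
  have ha1 : a 1 = δ / β * (A + B - 1) := by
    rw [ha, hU, hV]
    field_simp
    ring
  -- the linear recurrence
  have hrec : ∀ s : ℕ, γ * a (s + 2) =
      (1 + η * β) * (1 + γ) * a (s + 1) - (1 + η * β) * a s := by
    intro s
    have hA : γ * A ^ (s + 2) =
        (1 + η * β) * (1 + γ) * A ^ (s + 1) - (1 + η * β) * A ^ s := by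
      linear_combination (A ^ s) * hArt
    have hB : γ * B ^ (s + 2) =
        (1 + η * β) * (1 + γ) * B ^ (s + 1) - (1 + η * β) * B ^ s := by
      linear_combination (B ^ s) * hBrt
    rw [ha (s + 2), ha (s + 1), ha s]
    linear_combination (δ / β * U) * hA + (δ / β * V) * hB
  intro t ht
  induction t, ht using Nat.le_induction with
  | base =>
    simp only [Finset.sum_range_one]
    norm_num
    rw [ha0, ha1]
    linear_combination (-(δ / β)) * hsum
  | succ t ht IH =>
    obtain ⟨s, rfl⟩ := Nat.exists_eq_add_of_le ht
    simp only [Nat.add_sub_cancel, show 1 + s - 1 = s from by omega] at IH ⊢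
    rw [Finset.sum_range_succ]
    have := hrec s
    have hs2 : s + 2 = 1 + s + 1 := by omega
    have hs1 : s + 1 = 1 + s := by omega
    rw [hs2, hs1] at this
    linear_combination IH - this
end

section
/- Let 0 < γ < 1, ηβ > 0, with A, B the roots as above (A > B). Then γA > 1, 0 < γB < 1, 1/(γ+1) < B < 1, U > 0, V > 0, U + V = 1, I > 0, and J > 0, where I = (γA + A − 1)/((A−B)(γA−1)) and J = (γB + B − 1)/((A−B)(1−γB)). -/
set_option maxHeartbeats 1000000 in
/-- Sign/range facts: `γA > 1`, `0 < γB < 1`, `1/(γ+1) < B < 1`,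
`U > 0`, `V > 0`, `U + V = 1`, `I > 0`, `J > 0`. -/
theorem stmt_5 (γ η β : ℝ) (hγ0 : 0 < γ) (hγ1 : γ < 1) (hη : 0 < η) (hβ : 0 < β)
    (A B : ℝ)
    (hArt : γ * A ^ 2 - (1 + η * β) * (1 + γ) * A + (1 + η * β) = 0)
    (hBrt : γ * B ^ 2 - (1 + η * β) * (1 + γ) * B + (1 + η * β) = 0)
    (hAB : A > B)
    (U V I J : ℝ)
    (hU : U = (A - 1) / (A - B)) (hV : V = (1 - B) / (A - B))
    (hI : I = (γ * A + A - 1) / ((A - B) * (γ * A - 1)))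
    (hJ : J = (γ * B + B - 1) / ((A - B) * (1 - γ * B))) :
    γ * A > 1 ∧ 0 < γ * B ∧ γ * B < 1 ∧ 1 / (γ + 1) < B ∧ B < 1 ∧
      U > 0 ∧ V > 0 ∧ U + V = 1 ∧ I > 0 ∧ J > 0 := by
  have hc : 1 < 1 + η * β := by nlinarith
  have hd : 0 < A - B := by linarith
  have hkey : (γ * (A + B) - (1 + η * β) * (1 + γ)) * (A - B) = 0 := by
    linear_combination hArt - hBrt
  have hsum : γ * (A + B) = (1 + η * β) * (1 + γ) := by
    rcases mul_eq_zero.1 hkey with h | h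
    · linarith
    · linarith
  have hprod : γ * A * B = 1 + η * β := by
    linear_combination A * hsum - hArt
  -- (1-A)(1-B) = 1 - c < 0
  have h1 : γ * ((1 - A) * (1 - B)) = γ * (1 - (1 + η * β)) := by
    linear_combination hprod - hsum
  have h1' : (1 - A) * (1 - B) < 0 := by
    have := mul_pos hγ0 (show (0:ℝ) < (1 + η * β) - 1 by linarith)
    nlinarith [h1]
  have hB1 : B < 1 := by
    by_contra h
    push_neg at h
    have h9 : 0 ≤ (A - 1) * (B - 1) := mul_nonneg (by linarith) (by linarith)
    nlinarith [h9]
  have hA1 : 1 < A := by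
    by_contra h
    push_neg at h
    exact absurd h1' (not_lt.2 (mul_nonneg (by linarith) (by linarith)))
  -- (1-γA)(1-γB) = 1 - c < 0
  have h2' : (1 - γ * A) * (1 - γ * B) < 0 := by
    have h2 : (1 - γ * A) * (1 - γ * B) = 1 - (1 + η * β) := by
      linear_combination γ * hprod - hsum
    linarith
  have hγAB : γ * B < γ * A := mul_lt_mul_of_pos_left hAB hγ0
  have hγA : 1 < γ * A := by
    by_contra h
    push_neg at h
    exact absurd h2' (not_lt.2 (mul_nonneg (by linarith) (by linarith)))
  have hγB : γ * B < 1 := by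
    by_contra h
    push_neg at h
    have h9 : 0 ≤ (γ * A - 1) * (γ * B - 1) := mul_nonneg (by linarith) (by linarith)
    nlinarith [h9]
  -- ((γ+1)A-1)((γ+1)B-1) = 1 > 0
  have h3' : ((γ + 1) * A - 1) * ((γ + 1) * B - 1) > 0 := by
    have h3 : γ * (((γ + 1) * A - 1) * ((γ + 1) * B - 1)) = γ := by
      linear_combination (γ + 1) ^ 2 * hprod - (γ + 1) * hsum
    nlinarith [h3]
  have hAl' : (γ + 1) * A - 1 > 0 := by nlinarith [hγA, hA1]
  have hBl' : (γ + 1) * B - 1 > 0 := by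
    by_contra h
    push_neg at h
    exact absurd h3' (not_lt.2 (mul_nonpos_of_nonneg_of_nonpos (by linarith) (by linarith)))
  have hBl : 1 / (γ + 1) < B := by
    rw [div_lt_iff₀ (by linarith)]
    linarith [hBl', mul_comm B (γ + 1)]
  have hB0 : 0 < B := lt_trans (by positivity) hBl
  refine ⟨hγA, by positivity, hγB, hBl, hB1, ?_, ?_, ?_, ?_, ?_⟩
  · rw [hU]; exact div_pos (by linarith) hd
  · rw [hV]; exact div_pos (by linarith) hd
  · rw [hU, hV]
    field_simp
    ring
  · rw [hI]
    exact div_pos (by nlinarith [hγA, hA1]) (mul_pos hd (by linarith))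
  · rw [hJ]
    exact div_pos (by nlinarith [hBl']) (mul_pos hd (by linarith))
end

section
/- With the same A, B, I, J as above, it holds that I·A + J·B = (1 + ηβ + ηβγ)/(ηβγ). -/
/-- `I·A + J·B = (1 + ηβ + ηβγ)/(ηβγ)`. -/
theorem stmt_7 (γ η β : ℝ) (hγ0 : 0 < γ) (hγ1 : γ < 1) (hη : 0 < η) (hβ : 0 < β)
    (A B : ℝ)
    (hArt : γ * A ^ 2 - (1 + η * β) * (1 + γ) * A + (1 + η * β) = 0)
    (hBrt : γ * B ^ 2 - (1 + η * β) * (1 + γ) * B + (1 + η * β) = 0)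
    (hAB : A > B)
    (I J : ℝ)
    (hI : I = (γ * A + A - 1) / ((A - B) * (γ * A - 1)))
    (hJ : J = (γ * B + B - 1) / ((A - B) * (1 - γ * B))) :
    I * A + J * B = (1 + η * β + η * β * γ) / (η * β * γ) := by
  have hηβ : 0 < η * β := mul_pos hη hβ
  have hABne : A - B ≠ 0 := sub_ne_zero.mpr (ne_of_gt hAB)
  have hs : γ * (A + B) = (1 + η * β) * (1 + γ) := by
    have h0 : (A - B) * (γ * (A + B) - (1 + η * β) * (1 + γ)) = 0 := by
      linear_combination hArt - hBrt
    rcases mul_eq_zero.mp h0 with h | h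
    · exact absurd h hABne
    · linarith
  have hp : γ * (A * B) = 1 + η * β := by
    linear_combination A * hs - hArt
  have hγA : γ * A - 1 ≠ 0 := by
    intro h
    have : η * β = 0 := by
      linear_combination (-γ) * hArt + (γ * A + 1 - (1 + η * β) * (1 + γ)) * h
    nlinarith
  have hγB : 1 - γ * B ≠ 0 := by
    intro h
    have : η * β = 0 := by
      linear_combination (-γ) * hBrt - (γ * B + 1 - (1 + η * β) * (1 + γ)) * h
    nlinarith
  have hden : (γ * A - 1) * (1 - γ * B) = η * β := by
    linear_combination hs - γ * hp
  have hnum : γ * ((γ * A + A - 1) * A * (1 - γ * B) + (γ * B + B - 1) * B * (γ * A - 1))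
      = (A - B) * (1 + η * β + η * β * γ) := by
    linear_combination ((A - B) * (1 + γ)) * hs - ((A - B) * γ * (1 + γ)) * hp
  have key : I * A + J * B
      = ((γ * A + A - 1) * A * (1 - γ * B) + (γ * B + B - 1) * B * (γ * A - 1))
        / ((A - B) * ((γ * A - 1) * (1 - γ * B))) := by
    rw [hI, hJ]
    field_simp
  rw [key, hden]
  rw [div_eq_div_iff (by positivity) (by positivity)]
  linear_combination (η * β) * hnum
end

section
/- With h as defined above (h(x) = ηδ[I(γA)^x + J(γB)^x − 1/(ηβ) − (γ²(γ^x−1) − (γ−1)x)/(γ−1)²]), for every integer x ≥ 1: h(x) − h(x−1) ≥ 0. Hence h is nondecreasing on the nonnegative integers and h(x) ≥ 0 for all x ≥ 0. -/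
set_option maxHeartbeats 1000000 in
/-- `h x − h (x−1) ≥ 0` for integers `x ≥ 1`; hence `h` is
nondecreasing on the nonnegative integers and `h x ≥ 0` for all `x ≥ 0`. -/
theorem stmt_9 (γ η β δ : ℝ) (hγ0 : 0 < γ) (hγ1 : γ < 1) (hη : 0 < η) (hβ : 0 < β)
    (hδ : 0 < δ) (A B : ℝ)
    (hArt : γ * A ^ 2 - (1 + η * β) * (1 + γ) * A + (1 + η * β) = 0)
    (hBrt : γ * B ^ 2 - (1 + η * β) * (1 + γ) * B + (1 + η * β) = 0)
    (hAB : A > B)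
    (I J : ℝ)
    (hI : I = (γ * A + A - 1) / ((A - B) * (γ * A - 1)))
    (hJ : J = (γ * B + B - 1) / ((A - B) * (1 - γ * B)))
    (h : ℕ → ℝ)
    (hh : ∀ x : ℕ, h x = η * δ * (I * (γ * A) ^ x + J * (γ * B) ^ x - 1 / (η * β)
      - (γ ^ 2 * (γ ^ x - 1) - (γ - 1) * (x : ℝ)) / (γ - 1) ^ 2)) :
    (∀ x : ℕ, 1 ≤ x → h x - h (x - 1) ≥ 0) ∧ Monotone h ∧ ∀ x : ℕ, h x ≥ 0 := by
  have hηβ : 0 < η * β := mul_pos hη hβ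
  have hηβ' : η * β ≠ 0 := ne_of_gt hηβ
  have hγ1' : γ - 1 ≠ 0 := ne_of_lt (by linarith)
  have h1γ' : (1 : ℝ) - γ ≠ 0 := ne_of_gt (by linarith)
  have hABne : A - B ≠ 0 := sub_ne_zero.mpr (ne_of_gt hAB)
  -- Vieta
  have hsum : γ * (A + B) = (1 + η * β) * (1 + γ) := by
    have h1 : (A - B) * (γ * (A + B) - (1 + η * β) * (1 + γ)) = 0 := by
      linear_combination hArt - hBrt
    rcases mul_eq_zero.mp h1 with h2 | h2
    · exact absurd h2 hABne
    · linarith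
  have hprod : γ * (A * B) = 1 + η * β := by
    have h1 : (A - B) * (γ * (A * B) - (1 + η * β)) = 0 := by
      linear_combination B * hArt - A * hBrt
    rcases mul_eq_zero.mp h1 with h2 | h2
    · exact absurd h2 hABne
    · linarith
  have hkey : (γ * A - 1) * (γ * B - 1) = -(η * β) := by
    linear_combination γ * hprod - hsum
  have hA1 : 1 < γ * A := by nlinarith [mul_pos hγ0 (sub_pos.mpr hAB)]
  have hB1 : γ * B < 1 := by nlinarith
  have hA1' : γ * A - 1 ≠ 0 := ne_of_gt (by linarith)
  have hB1' : 1 - γ * B ≠ 0 := ne_of_gt (by linarith)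
  have hID : I * (γ * A - 1) = (γ * A + A - 1) / (A - B) := by
    rw [hI]; field_simp
  have hJD : J * (γ * B - 1) = -((γ * B + B - 1) / (A - B)) := by
    rw [hJ]; field_simp; ring
  -- base cases
  have hIJ : I + J = 1 / (η * β) := by
    rw [hI, hJ]
    rw [div_add_div _ _ (mul_ne_zero hABne hA1') (mul_ne_zero hABne hB1'), div_eq_div_iff (mul_ne_zero (mul_ne_zero hABne hA1') (mul_ne_zero hABne hB1')) hηβ']
    linear_combination (A - B) ^ 2 * hkey
  have hh0 : h 0 = 0 := by
    have e0 := hh 0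
    simp only [pow_zero, Nat.cast_zero] at e0
    rw [e0]
    linear_combination (η * δ) * hIJ
  have hD0 : h 1 - h 0 = 0 := by
    have e1 : h 1 - h 0 = η * δ * (I * (γ * A - 1) + J * (γ * B - 1) - (1 + γ)) := by
      rw [hh 1, hh 0]; push_cast
      field_simp
      ring
    rw [e1, hID, hJD]
    field_simp
    ring
  have hD1 : h 2 - h 1 = η * δ * (η * β) * (1 + γ) ^ 2 := by
    have e2 : h 2 - h 1 = η * δ * (I * (γ * A - 1) * (γ * A) + J * (γ * B - 1) * (γ * B)
        - (1 + γ + γ ^ 2)) := by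
      rw [hh 2, hh 1]; push_cast
      field_simp
      ring
    rw [e2, hID, hJD]
    have e3 : (γ * A + A - 1) / (A - B) * (γ * A) + -((γ * B + B - 1) / (A - B)) * (γ * B)
        - (1 + γ + γ ^ 2) = η * β * (1 + γ) ^ 2 := by
      field_simp
      linear_combination ((A - B) * (1 + γ)) * hsum
    rw [e3]
    ring
  -- recurrence
  have hrA : (γ * A) * (γ * A) = (1 + η * β) * (1 + γ) * (γ * A) - γ * (1 + η * β) := by
    linear_combination γ * hArt
  have hrB : (γ * B) * (γ * B) = (1 + η * β) * (1 + γ) * (γ * B) - γ * (1 + η * β) := by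
    linear_combination γ * hBrt
  have cancelA : ∀ x : ℕ, I * (γ * A) ^ (x + 3) - I * (γ * A) ^ (x + 2) =
      (1 + η * β) * (1 + γ) * (I * (γ * A) ^ (x + 2) - I * (γ * A) ^ (x + 1))
      - γ * (1 + η * β) * (I * (γ * A) ^ (x + 1) - I * (γ * A) ^ x) := by
    intro x
    simp only [pow_succ]
    linear_combination (I * (γ * A) ^ x * (γ * A - 1)) * hrA
  have cancelB : ∀ x : ℕ, J * (γ * B) ^ (x + 3) - J * (γ * B) ^ (x + 2) =
      (1 + η * β) * (1 + γ) * (J * (γ * B) ^ (x + 2) - J * (γ * B) ^ (x + 1))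
      - γ * (1 + η * β) * (J * (γ * B) ^ (x + 1) - J * (γ * B) ^ x) := by
    intro x
    simp only [pow_succ]
    linear_combination (J * (γ * B) ^ x * (γ * B - 1)) * hrB
  have geom : ∀ x : ℕ,
      (- (1 / (η * β)) - (γ ^ 2 * (γ ^ (x + 3) - 1) - (γ - 1) * ((x : ℝ) + 3)) / (γ - 1) ^ 2)
      - (- (1 / (η * β)) - (γ ^ 2 * (γ ^ (x + 2) - 1) - (γ - 1) * ((x : ℝ) + 2)) / (γ - 1) ^ 2)
      = (1 + η * β) * (1 + γ) *
          ((- (1 / (η * β)) - (γ ^ 2 * (γ ^ (x + 2) - 1) - (γ - 1) * ((x : ℝ) + 2)) / (γ - 1) ^ 2)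
          - (- (1 / (η * β)) - (γ ^ 2 * (γ ^ (x + 1) - 1) - (γ - 1) * ((x : ℝ) + 1)) / (γ - 1) ^ 2))
        - γ * (1 + η * β) *
          ((- (1 / (η * β)) - (γ ^ 2 * (γ ^ (x + 1) - 1) - (γ - 1) * ((x : ℝ) + 1)) / (γ - 1) ^ 2)
          - (- (1 / (η * β)) - (γ ^ 2 * (γ ^ x - 1) - (γ - 1) * (x : ℝ)) / (γ - 1) ^ 2))
        + η * β * ((1 - γ ^ (x + 4)) / (1 - γ)) := by
    intro x
    simp only [pow_succ]
    field_simp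
    ring
  have hrec : ∀ x : ℕ, h (x + 3) - h (x + 2) =
      (1 + η * β) * (1 + γ) * (h (x + 2) - h (x + 1))
      - γ * (1 + η * β) * (h (x + 1) - h x)
      + η * δ * (η * β) * ((1 - γ ^ (x + 4)) / (1 - γ)) := by
    intro x
    rw [hh (x + 3), hh (x + 2), hh (x + 1), hh x]
    push_cast
    linear_combination (η * δ) * cancelA x + (η * δ) * cancelB x + (η * δ) * geom x
  have hD1pos : 0 ≤ η * δ * (η * β) * (1 + γ) ^ 2 := by positivity
  -- induction
  have main : ∀ x : ℕ, 0 ≤ h (x + 1) - h x ∧ h (x + 1) - h x ≤ h (x + 2) - h (x + 1) := by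
    intro x
    induction x with
    | zero =>
      norm_num
      constructor <;> linarith [hD0, hD1, hD1pos]
    | succ n ih =>
      obtain ⟨ih1, ih2⟩ := ih
      simp only [show n + 1 + 1 = n + 2 from rfl, show n + 1 + 2 = n + 3 from rfl]
      have h01 : 0 ≤ h (n + 2) - h (n + 1) := le_trans ih1 ih2
      refine ⟨h01, ?_⟩
      have hr := hrec n
      have hE : 0 ≤ η * δ * (η * β) * ((1 - γ ^ (n + 4)) / (1 - γ)) := by
        have hp : γ ^ (n + 4) ≤ 1 := pow_le_one₀ hγ0.le hγ1.le
        have hq : 0 ≤ (1 - γ ^ (n + 4)) / (1 - γ) := div_nonneg (by linarith) (by linarith)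
        have h2 : 0 ≤ η * δ * (η * β) := by positivity
        exact mul_nonneg h2 hq
      have p1 : 0 ≤ γ * (1 + η * β) * ((h (n + 2) - h (n + 1)) - (h (n + 1) - h n)) := by
        apply mul_nonneg (by positivity) (by linarith)
      have p2 : 0 ≤ η * β * (h (n + 2) - h (n + 1)) := mul_nonneg hηβ.le h01
      nlinarith [hr, hE, p1, p2]
  have hmono : Monotone h := by
    apply monotone_nat_of_le_succ
    intro n
    linarith [(main n).1]
  refine ⟨?_, hmono, ?_⟩
  · intro x hx
    obtain ⟨y, rfl⟩ : ∃ y, x = y + 1 := ⟨x - 1, (Nat.succ_pred_eq_of_pos hx).symm⟩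
    simpa using (main y).1
  · intro x
    have hx := hmono (Nat.zero_le x)
    linarith [hh0, hx]
end

section
/- Define u(x) = U(γA)^x + V(γB)^x − 1 for integers x ≥ 0, with U, V, A, B, γ as above. Then u(x) ≥ (1 + ηβ + ηβγ)^x − 1, and in particular u(x) > 0 for all x ≥ 1. -/
/-- With `u x = U(γA)ˣ + V(γB)ˣ − 1`, for all natural `x`:
`u x ≥ (1 + ηβ + ηβγ)ˣ − 1`, and `u x > 0` for all `x ≥ 1`. -/
theorem stmt_10 (γ η β : ℝ) (hγ0 : 0 < γ) (hγ1 : γ < 1) (hη : 0 < η) (hβ : 0 < β)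
    (A B : ℝ)
    (hArt : γ * A ^ 2 - (1 + η * β) * (1 + γ) * A + (1 + η * β) = 0)
    (hBrt : γ * B ^ 2 - (1 + η * β) * (1 + γ) * B + (1 + η * β) = 0)
    (hAB : A > B)
    (U V : ℝ) (hU : U = (A - 1) / (A - B)) (hV : V = (1 - B) / (A - B))
    (u : ℕ → ℝ) (hu : ∀ x : ℕ, u x = U * (γ * A) ^ x + V * (γ * B) ^ x - 1) :
    (∀ x : ℕ, u x ≥ (1 + η * β + η * β * γ) ^ x - 1) ∧ ∀ x : ℕ, 1 ≤ x → u x > 0 := by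
  have hηβ : 0 < η * β := mul_pos hη hβ
  have hABd : 0 < A - B := by linarith
  -- Vieta
  have hsum : γ * (A + B) = (1 + η * β) * (1 + γ) := by
    have h := sub_eq_zero.mpr (hArt.trans hBrt.symm)
    have h2 : (A - B) * (γ * (A + B) - (1 + η * β) * (1 + γ)) = 0 := by ring_nf; nlinarith [h]
    rcases mul_eq_zero.mp h2 with h3 | h3
    · exact absurd h3 (ne_of_gt hABd)
    · linarith
  have hprod : γ * (A * B) = 1 + η * β := by
    have h2 : (A - B) * (γ * (A * B) - (1 + η * β)) = 0 := by nlinarith [hArt, hBrt]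
    rcases mul_eq_zero.mp h2 with h3 | h3
    · exact absurd h3 (ne_of_gt hABd)
    · linarith
  have hB0 : 0 < B := by
    by_contra h
    push_neg at h
    have h1 : (0:ℝ) ≤ 1 + η * β := by linarith
    have h2 : (0:ℝ) ≤ 1 + γ := by linarith
    nlinarith [hBrt, mul_nonneg hγ0.le (sq_nonneg B), mul_nonneg (mul_nonneg h1 h2) (neg_nonneg.mpr h)]
  have hA0 : 0 < A := lt_trans hB0 hAB
  have hkey : (A - 1) * (1 - B) = η * β := by
    have : γ * ((A - 1) * (1 - B)) = η * β * γ := by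
      have : γ * ((A - 1) * (1 - B)) = γ * (A + B) - γ - γ * (A * B) := by ring
      rw [this, hsum, hprod]; ring
    field_simp at this
    nlinarith [this]
  have hA1 : 1 < A := by nlinarith
  have hB1 : B < 1 := by nlinarith
  have hU0 : 0 < U := by rw [hU]; exact div_pos (by linarith) hABd
  have hV0 : 0 < V := by rw [hV]; exact div_pos (by linarith) hABd
  have hUV : U + V = 1 := by rw [hU, hV]; field_simp; ring
  set a := γ * A with ha
  set b := γ * B with hb
  set c := 1 + η * β + η * β * γ with hc
  have hb0 : 0 < b := mul_pos hγ0 hB0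
  have hab : b ≤ a := by
    have := mul_le_mul_of_nonneg_left (le_of_lt hAB) (le_of_lt hγ0)
    linarith
  have hcab : U * a + V * b = c := by
    have h1 : U * a + V * b = γ * (A + B) - γ := by
      rw [hU, hV, ha, hb]
      field_simp
      ring
    rw [h1, hsum, hc]; ring
  have hc1 : 1 < c := by nlinarith
  have main : ∀ x : ℕ, U * a ^ x + V * b ^ x ≥ c ^ x := by
    intro x
    induction x with
    | zero => simp; linarith
    | succ n ih =>
      have hpow : b ^ n ≤ a ^ n := pow_le_pow_left₀ (le_of_lt hb0) hab n
      have hident : U * a ^ (n + 1) + V * b ^ (n + 1)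
          = (U * a ^ n + V * b ^ n) * (U * a + V * b)
            + U * V * (a - b) * (a ^ n - b ^ n) := by
        have hV' : V = 1 - U := by linarith
        subst hV'
        ring
      have hnn : 0 ≤ U * V * (a - b) * (a ^ n - b ^ n) := by
        apply mul_nonneg
        apply mul_nonneg
        · positivity
        · linarith
        · linarith
      rw [hident, hcab]
      have hc0 : (0:ℝ) < c := by linarith
      have : (U * a ^ n + V * b ^ n) * c ≥ c ^ n * c :=
        mul_le_mul_of_nonneg_right ih (le_of_lt hc0)
      calc (U * a ^ n + V * b ^ n) * c + U * V * (a - b) * (a ^ n - b ^ n)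
          ≥ c ^ n * c := by linarith
        _ = c ^ (n + 1) := by ring
  constructor
  · intro x
    rw [hu x]
    have := main x
    linarith
  · intro x hx
    rw [hu x]
    have h1 : c ≤ c ^ x := by
      calc c = c ^ 1 := (pow_one c).symm
        _ ≤ c ^ x := pow_le_pow_right₀ hc1.le hx
    linarith [main x]
end

section
/- Suppose a sequence of nonnegative reals G(t), t = 0, 1, …, satisfies G(0) = 0 and the recursion G(t) ≤ (ηβ+1)G(t−1) + ηβγ·Σ_{b=1}^{t} γ^{b−1} G(t−b) + ηδ·Σ_{b=0}^{t} γ^b for t ≥ 1, where 0 < γ < 1 and η, β, δ > 0. Then G(t) ≤ f(t) for all t ≥ 0, where f(x) = (δ/β)(γ^x(U A^x + V B^x) − 1) with A, B, U, V as defined from the roots of γx² − (1+ηβ)(1+γ)x + (1+ηβ) = 0. -/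
/-- Any nonnegative sequence `G` with `G 0 = 0` satisfying the
recursion `G t ≤ (ηβ+1)G(t−1) + ηβγ·∑_{b=1}^{t} γ^{b−1} G(t−b) + ηδ·∑_{b=0}^{t} γᵇ`
is bounded by `f x = (δ/β)(γˣ(UAˣ + VBˣ) − 1)`. -/
theorem stmt_11 (γ η β δ : ℝ) (hγ0 : 0 < γ) (hγ1 : γ < 1) (hη : 0 < η) (hβ : 0 < β)
    (hδ : 0 < δ) (A B : ℝ)
    (hArt : γ * A ^ 2 - (1 + η * β) * (1 + γ) * A + (1 + η * β) = 0)
    (hBrt : γ * B ^ 2 - (1 + η * β) * (1 + γ) * B + (1 + η * β) = 0)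
    (hAB : A > B)
    (U V : ℝ) (hU : U = (A - 1) / (A - B)) (hV : V = (1 - B) / (A - B))
    (f : ℕ → ℝ)
    (hf : ∀ x : ℕ, f x = (δ / β) * (γ ^ x * (U * A ^ x + V * B ^ x) - 1))
    (G : ℕ → ℝ) (hGnn : ∀ t, 0 ≤ G t) (hG0 : G 0 = 0)
    (hGrec : ∀ t : ℕ, 1 ≤ t →
      G t ≤ (η * β + 1) * G (t - 1)
        + η * β * γ * (∑ b ∈ Finset.Icc 1 t, γ ^ (b - 1) * G (t - b))
        + η * δ * (∑ b ∈ Finset.range (t + 1), γ ^ b)) :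
    ∀ t : ℕ, G t ≤ f t := by
  have hABne : A - B ≠ 0 := sub_ne_zero.mpr (ne_of_gt hAB)
  have hUV : U + V = 1 := by
    rw [hU, hV]; field_simp
    ring
  have hrec : ∀ m : ℕ, γ * (U * A ^ (m + 2) + V * B ^ (m + 2)) =
      (1 + η * β) * (1 + γ) * (U * A ^ (m + 1) + V * B ^ (m + 1))
      - (1 + η * β) * (U * A ^ m + V * B ^ m) := by
    intro m
    linear_combination (U * A ^ m) * hArt + (V * B ^ m) * hBrt
  have hs1 : γ * (U * A ^ 1 + V * B ^ 1) = 1 + η * β + η * β * γ := by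
    rw [hU, hV]; field_simp
    linear_combination hArt - hBrt
  have hkey : ∀ n : ℕ, (1 + η * β) * (U * A ^ n + V * B ^ n)
      + η * β * γ * (∑ i ∈ Finset.range (n + 1), (U * A ^ i + V * B ^ i))
      = γ * (U * A ^ (n + 1) + V * B ^ (n + 1)) := by
    intro n
    induction n with
    | zero =>
      simp only [zero_add, Finset.sum_range_one, pow_zero, mul_one, pow_one, hUV]
      linear_combination -hs1
    | succ m ihm =>
      rw [Finset.sum_range_succ]
      linear_combination ihm - hrec m
  intro t
  induction t using Nat.strong_induction_on with
  | _ t ih =>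
    match t with
    | 0 =>
      rw [hG0, hf]
      simp [hUV]
    | (n + 1) =>
      have h1 := hGrec (n + 1) (by omega)
      simp only [Nat.add_sub_cancel] at h1
      have hIcc : ∑ b ∈ Finset.Icc 1 (n + 1), γ ^ (b - 1) * G (n + 1 - b)
          = ∑ j ∈ Finset.range (n + 1), γ ^ j * G (n - j) := by
        refine Finset.sum_nbij' (fun b => b - 1) (fun j => j + 1) ?_ ?_ ?_ ?_ ?_ <;>
          simp only [Finset.mem_Icc, Finset.mem_range] <;> intro a ha
        · omega
        · omega
        · omega
        · omega
        · congr 2 <;> omega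
      rw [hIcc] at h1
      have h2 : ∑ j ∈ Finset.range (n + 1), γ ^ j * G (n - j)
          ≤ ∑ j ∈ Finset.range (n + 1), γ ^ j * f (n - j) := by
        apply Finset.sum_le_sum
        intro j hj
        exact mul_le_mul_of_nonneg_left (ih (n - j) (by omega)) (pow_nonneg hγ0.le j)
      have hsum : ∑ j ∈ Finset.range (n + 1), γ ^ j * f (n - j)
          = (δ / β) * (γ ^ n * ∑ i ∈ Finset.range (n + 1), (U * A ^ i + V * B ^ i))
            - (δ / β) * ∑ j ∈ Finset.range (n + 1), γ ^ j := by
        rw [← Finset.sum_range_reflect (fun i => U * A ^ i + V * B ^ i) (n + 1)]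
        rw [Finset.mul_sum, Finset.mul_sum, Finset.mul_sum, ← Finset.sum_sub_distrib]
        apply Finset.sum_congr rfl
        intro j hj
        have hj' := Finset.mem_range.mp hj
        simp only [Nat.add_sub_cancel]
        have hp : γ ^ n = γ ^ j * γ ^ (n - j) := by
          rw [← pow_add]; congr 1; omega
        rw [hf]
        linear_combination (-(δ / β) * (U * A ^ (n - j) + V * B ^ (n - j))) * hp
      have hgs : ∑ b ∈ Finset.range (n + 2), γ ^ b
          = γ * ∑ j ∈ Finset.range (n + 1), γ ^ j + 1 := geom_sum_succ
      have hc : β * (δ / β) = δ := by field_simp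
      calc G (n + 1) ≤ (η * β + 1) * G n
            + η * β * γ * (∑ j ∈ Finset.range (n + 1), γ ^ j * G (n - j))
            + η * δ * (∑ b ∈ Finset.range (n + 1 + 1), γ ^ b) := h1
        _ ≤ (η * β + 1) * f n
            + η * β * γ * (∑ j ∈ Finset.range (n + 1), γ ^ j * f (n - j))
            + η * δ * (∑ b ∈ Finset.range (n + 1 + 1), γ ^ b) := by
            have := ih n (by omega)
            have hβγ : 0 ≤ η * β * γ := by positivity
            nlinarith [h2, mul_le_mul_of_nonneg_left h2 hβγ]
        _ = f (n + 1) := by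
            rw [hsum, hf, hf]
            have hk := hkey n
            set S := ∑ i ∈ Finset.range (n + 1), (U * A ^ i + V * B ^ i) with hS
            set T := ∑ j ∈ Finset.range (n + 1), γ ^ j with hT
            rw [show (n + 1 + 1) = (n + 1) + 1 from rfl, hgs]
            linear_combination ((δ / β) * γ ^ n) * hk + (-(η * γ * T + η)) * hc
  done
end

section
/- Suppose F: ℝ^d → ℝ is β-smooth (its gradient is β-Lipschitz), and consider the update x⁺ = x + γv⁺ − η∇F(x) where v⁺ = γv − η∇F(x), with η, β > 0, 0 < γ < 1, and suppose ‖γv‖ ≤ μη‖∇F(x)‖ for some μ ≥ 0. Then F(x⁺) − F(x) ≤ [ −η(γ+1)(1 − βη(γ+1)/2) + βη²γ²μ²/2 + ηγμ(1 − βη(γ+1)) ]·‖∇F(x)‖², provided 0 < βη(γ+1) ≤ 1. -/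
open InnerProductSpace Set

lemma descent_lemma {E : Type*} [NormedAddCommGroup E] [InnerProductSpace ℝ E] [CompleteSpace E]
    (F : E → ℝ) (grad : E → E) (hgrad : ∀ x, HasGradientAt F (grad x) x)
    (β : ℝ) (hβ : 0 ≤ β)
    (hsmooth : ∀ x y : E, ‖grad x - grad y‖ ≤ β * ‖x - y‖) (x y : E) :
    F y ≤ F x + inner ℝ (grad x) (y - x) + β / 2 * ‖y - x‖ ^ 2 := by
  set d := y - x with hd
  set φ : ℝ → ℝ := fun t => F (x + t • d) - t * inner ℝ (grad x) d - β * t ^ 2 / 2 * ‖d‖ ^ 2 with hφ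
  have hder : ∀ t : ℝ, HasDerivAt φ
      ((inner ℝ (grad (x + t • d) - grad x) d : ℝ) - β * t * ‖d‖ ^ 2) t := by
    intro t
    have hline : HasDerivAt (fun t : ℝ => x + t • d) d t := by
      simpa using ((hasDerivAt_id t).smul_const d).const_add x
    have h1 : HasDerivAt (fun t : ℝ => F (x + t • d))
        ((toDual ℝ E (grad (x + t • d))) d) t :=
      (hgrad (x + t • d)).hasFDerivAt.comp_hasDerivAt t hline
    rw [toDual_apply_apply] at h1
    have h2 : HasDerivAt (fun t : ℝ => t * (inner ℝ (grad x) d : ℝ)) (inner ℝ (grad x) d) t := by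
      simpa using (hasDerivAt_id t).mul_const (inner ℝ (grad x) d : ℝ)
    have h3 : HasDerivAt (fun t : ℝ => β * t ^ 2 / 2 * ‖d‖ ^ 2) (β * t * ‖d‖ ^ 2) t := by
      have := (((hasDerivAt_pow 2 t).const_mul β).div_const 2).mul_const (‖d‖ ^ 2)
      exact this.congr_deriv (by ring)
    have := (h1.sub h2).sub h3
    exact this.congr_deriv (by rw [inner_sub_left])
  have hmono : AntitoneOn φ (Icc 0 1) := by
    refine antitoneOn_of_deriv_nonpos (convex_Icc 0 1)
      (fun t _ => ((hder t).continuousAt).continuousWithinAt)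
      (fun t ht => (hder t).differentiableAt.differentiableWithinAt) ?_
    intro t ht
    rw [interior_Icc] at ht
    rw [(hder t).deriv]
    have h1 : (inner ℝ (grad (x + t • d) - grad x) d : ℝ) ≤ β * t * ‖d‖ ^ 2 := by
      calc (inner ℝ (grad (x + t • d) - grad x) d : ℝ)
          ≤ ‖grad (x + t • d) - grad x‖ * ‖d‖ := real_inner_le_norm _ _
        _ ≤ β * ‖(x + t • d) - x‖ * ‖d‖ := by
            have := hsmooth (x + t • d) x
            have := norm_nonneg d
            nlinarith
        _ = β * t * ‖d‖ ^ 2 := by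
            rw [add_sub_cancel_left, norm_smul, Real.norm_eq_abs,
              abs_of_nonneg ht.1.le]; ring
    linarith
  have h01 := hmono (left_mem_Icc.2 zero_le_one) (right_mem_Icc.2 zero_le_one) zero_le_one
  simp only [hφ] at h01
  norm_num at h01
  have hy : x + d = y := by rw [hd]; abel
  rw [hy] at h01
  linarith

lemma aux_inner {E : Type*} [NormedAddCommGroup E] [InnerProductSpace ℝ E]
    (a b : E) (p q : ℝ) :
    (inner ℝ b (p • a - q • b) : ℝ) = p * inner ℝ b a - q * ‖b‖ ^ 2 := by
  rw [inner_sub_right, real_inner_smul_right, real_inner_smul_right, real_inner_self_eq_norm_sq]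

lemma aux_norm {E : Type*} [NormedAddCommGroup E] [InnerProductSpace ℝ E]
    (a b : E) (p q : ℝ) :
    ‖p • a - q • b‖ ^ 2 = p ^ 2 * ‖a‖ ^ 2 - 2 * (p * q * inner ℝ b a) + q ^ 2 * ‖b‖ ^ 2 := by
  rw [norm_sub_sq_real, real_inner_smul_left, real_inner_smul_right, norm_smul, norm_smul,
    Real.norm_eq_abs, Real.norm_eq_abs, mul_pow, mul_pow, sq_abs, sq_abs, real_inner_comm]
  ring

/-- Descent of one momentum step for a `β`-smooth function. -/
theorem stmt_16 {E : Type*} [NormedAddCommGroup E] [InnerProductSpace ℝ E] [CompleteSpace E]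
    (F : E → ℝ) (grad : E → E) (hgrad : ∀ x, HasGradientAt F (grad x) x)
    (β η γ μ : ℝ) (hβ : 0 < β) (hη : 0 < η) (hγ0 : 0 < γ) (hγ1 : γ < 1)
    (hμ : 0 ≤ μ)
    (hsmooth : ∀ x y : E, ‖grad x - grad y‖ ≤ β * ‖x - y‖)
    (hstep0 : 0 < β * η * (γ + 1)) (hstep1 : β * η * (γ + 1) ≤ 1)
    (x v : E) (hv : ‖γ • v‖ ≤ μ * η * ‖grad x‖)
    (vplus xplus : E)
    (hvp : vplus = γ • v - η • grad x)
    (hxp : xplus = x + γ • vplus - η • grad x) :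
    F xplus - F x ≤
      (-(η * (γ + 1)) * (1 - β * η * (γ + 1) / 2) + β * η ^ 2 * γ ^ 2 * μ ^ 2 / 2
        + η * γ * μ * (1 - β * η * (γ + 1))) * ‖grad x‖ ^ 2 := by
  have hd : xplus - x = γ • (γ • v) - (η * (γ + 1)) • grad x := by
    rw [hxp, hvp, smul_sub, smul_smul γ η (grad x)]
    have h1 : η * (γ + 1) = γ * η + η := by ring
    rw [h1, add_smul]
    abel
  have hkey := descent_lemma F grad hgrad β hβ.le hsmooth x xplus
  rw [hd, aux_inner, aux_norm] at hkey
  set G := ‖grad x‖ with hG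
  set U := ‖γ • v‖ with hU
  set s : ℝ := inner ℝ (grad x) (γ • v) with hsdef
  have hGn : (0:ℝ) ≤ G := norm_nonneg _
  have hUn : (0:ℝ) ≤ U := norm_nonneg _
  have hsle : s ≤ μ * η * G ^ 2 := by
    have h1 : s ≤ G * U := real_inner_le_norm _ _
    nlinarith [hv]
  have hU2 : U ^ 2 ≤ (μ * η) ^ 2 * G ^ 2 := by nlinarith [hv]
  have hfac : 0 ≤ 1 - β * (η * (γ + 1)) := by nlinarith
  have key1 : 0 ≤ γ * (1 - β * (η * (γ + 1))) * (μ * η * G ^ 2 - s) :=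
    mul_nonneg (mul_nonneg hγ0.le hfac) (by linarith)
  have key2 : 0 ≤ β * γ ^ 2 / 2 * ((μ * η) ^ 2 * G ^ 2 - U ^ 2) :=
    mul_nonneg (by positivity) (by linarith)
  nlinarith [hkey, key1, key2]
end

section
/- Let δ > 0, β > 0, 0 < γ < 1, and for each η > 0 define A(η), B(η) as the roots of γx² − (1+ηβ)(1+γ)x + (1+ηβ) = 0 with A(η) > B(η), and I(η) = (γA(η)+A(η)−1)/((A(η)−B(η))(γA(η)−1)). Then lim_{η→0⁺} η·δ·(I(η) − 1/(ηβ)) = 0. -/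
open Filter Set Real

/-- As `η → 0⁺`, `η·δ·(I(η) − 1/(ηβ)) → 0`, where `A(η) > B(η)`
are the roots of `γx² − (1+ηβ)(1+γ)x + (1+ηβ) = 0` and
`I(η) = (γA(η)+A(η)−1)/((A(η)−B(η))(γA(η)−1))`. -/
theorem stmt_19 (γ β δ : ℝ) (hγ0 : 0 < γ) (hγ1 : γ < 1) (hβ : 0 < β) (hδ : 0 < δ)
    (A B I : ℝ → ℝ)
    (hA : ∀ η : ℝ, A η = ((1 + η * β) * (1 + γ)
      + Real.sqrt (((1 + η * β) * (1 + γ)) ^ 2 - 4 * γ * (1 + η * β))) / (2 * γ))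
    (hB : ∀ η : ℝ, B η = ((1 + η * β) * (1 + γ)
      - Real.sqrt (((1 + η * β) * (1 + γ)) ^ 2 - 4 * γ * (1 + η * β))) / (2 * γ))
    (hI : ∀ η : ℝ, I η = (γ * A η + A η - 1) / ((A η - B η) * (γ * A η - 1))) :
    Filter.Tendsto (fun η : ℝ => η * δ * (I η - 1 / (η * β)))
      (nhdsWithin 0 (Set.Ioi 0)) (nhds 0) := by
  have hβ' : β ≠ 0 := hβ.ne'
  have hγ' : γ ≠ 0 := hγ0.ne'
  set r : ℝ → ℝ := fun η => Real.sqrt (((1 + η * β) * (1 + γ)) ^ 2 - 4 * γ * (1 + η * β))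
    with hrdef
  set g : ℝ → ℝ := fun η =>
    δ * (((1+γ)*((1+η*β)*(1+γ) + r η) - 2*γ) * (r η + 1 - γ)) /
      (β * r η * ((1+γ)*(r η + 1 - γ) + ((1+γ)^2*((1+η*β)+1) - 4*γ))) - δ/β with hgdef
  have hr0 : r 0 = 1 - γ := by
    have : ((1 + 0 * β) * (1 + γ)) ^ 2 - 4 * γ * (1 + 0 * β) = (1-γ)^2 := by ring
    rw [hrdef]; simp only []; rw [this, Real.sqrt_sq (by linarith)]
  -- continuity of g at 0 within Ioi 0, with value 0
  have hrc : ContinuousAt r 0 :=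
    Real.continuous_sqrt.continuousAt.comp (by fun_prop)
  have hgc : ContinuousAt g 0 := by
    apply ContinuousAt.sub _ continuousAt_const
    apply ContinuousAt.div
    · fun_prop
    · fun_prop
    · rw [hr0]; nlinarith [sq_nonneg (1-γ), sq_nonneg (1+γ)]
  have h4ne : (4*(1-γ)) ≠ 0 := by nlinarith
  have hg0 : g 0 = 0 := by
    have e : g 0 = (4*(1-γ)) * δ / ((4*(1-γ)) * β) - δ/β := by
      simp only [hgdef, hr0]; ring
    rw [e, mul_div_mul_left δ β h4ne, sub_self]
  have hgt : Filter.Tendsto g (nhdsWithin 0 (Set.Ioi 0)) (nhds 0) := by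
    have h := (hgc.continuousWithinAt (s := Set.Ioi 0)).tendsto
    rwa [hg0] at h
  refine Filter.Tendsto.congr' ?_ hgt
  filter_upwards [self_mem_nhdsWithin] with η (hη : 0 < η)
  have hη' : η ≠ 0 := hη.ne'
  have hs1 : (1:ℝ) < 1 + η * β := by nlinarith
  have hsp : (0:ℝ) < 1 + η * β := by linarith
  have t1 : (0:ℝ) ≤ (1+η*β) * (((1+η*β)-1) * (1+γ)^2) :=
    mul_nonneg hsp.le (mul_nonneg (by linarith) (sq_nonneg _))
  have t2 : (0:ℝ) < (1+η*β) * (1-γ)^2 := mul_pos hsp (pow_pos (by linarith) 2)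
  have hDpos : 0 < ((1 + η * β) * (1 + γ)) ^ 2 - 4 * γ * (1 + η * β) := by nlinarith [t1, t2]
  have hr2 : r η ^ 2 = ((1 + η * β) * (1 + γ)) ^ 2 - 4 * γ * (1 + η * β) :=
    Real.sq_sqrt hDpos.le
  have hrpos : 0 < r η := Real.sqrt_pos.mpr hDpos
  have hQ : (0:ℝ) < (1+γ)^2*((1+η*β)+1) - 4*γ := by
    nlinarith [sq_nonneg γ, mul_nonneg (show (0:ℝ) ≤ (1+η*β)-1 by linarith) (sq_nonneg (1+γ))]
  have hq : (1-γ)^2 < r η ^ 2 := by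
    rw [hr2]
    nlinarith [mul_pos (show (0:ℝ) < (1+η*β)-1 by linarith) hQ]
  have hrgt : 1 - γ < r η := by
    nlinarith [hq, hrpos, show (0:ℝ) ≤ 1 - γ by linarith]
  have hrne : r η ≠ 0 := hrpos.ne'
  have hr1γ : 0 < r η + 1 - γ := by linarith
  have hM : 0 < (1+γ)*(r η + 1 - γ) + ((1+γ)^2*((1+η*β)+1) - 4*γ) := by
    have h5 : (0:ℝ) < (1+γ)*(r η + 1 - γ) := mul_pos (by linarith) (by linarith)
    linarith [h5, hQ]
  have hAB : A η - B η = r η / γ := by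
    rw [hA, hB]
    change ((1 + η * β) * (1 + γ) + r η) / (2 * γ) - ((1 + η * β) * (1 + γ) - r η) / (2 * γ) = r η / γ
    field_simp; ring
  have hnum : γ * A η + A η - 1 = ((1+γ)*((1+η*β)*(1+γ) + r η) - 2*γ) / (2*γ) := by
    rw [hA]
    change γ * (((1 + η * β) * (1 + γ) + r η) / (2 * γ)) + ((1 + η * β) * (1 + γ) + r η) / (2 * γ) - 1 = _
    field_simp; ring
  have key : (r η - (1-γ)) * (r η + (1-γ)) = η*β*((1+γ)^2*((1+η*β)+1) - 4*γ) := by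
    linear_combination hr2
  have hden : γ * A η - 1
      = η*β*((1+γ)*(r η + 1 - γ) + ((1+γ)^2*((1+η*β)+1) - 4*γ)) / (2*(r η + 1 - γ)) := by
    rw [hA]
    change γ * (((1 + η * β) * (1 + γ) + r η) / (2 * γ)) - 1 = _
    have h2 : r η + 1 - γ ≠ 0 := hr1γ.ne'
    field_simp
    linear_combination key
  rw [hI, hnum, hAB, hden, hgdef]
  have h2 : r η + 1 - γ ≠ 0 := hr1γ.ne'
  have hMne : (1+γ)*(r η + 1 - γ) + ((1+γ)^2*((1+η*β)+1) - 4*γ) ≠ 0 := hM.ne'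
  field_simp
end
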